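/- Let l < m be integers and define Q_{l,m}(x,y) = P^{l,m}(x,y) − P_{l,m}(x,y), where P_{l,m}(x,y) = 𝟙_{2^l ≤ δ(x,y) < 2^m} P(x,y). Then |Q_{l,m}(x,y)| ≤ 2√2 (2^{-l} 𝟙_{δ(x,y) < 2^l} + 2^{-m} 𝟙_{δ(x,y) < 2^m}) for all x ≠ y. -/
import Mathlib


open MeasureTheory Set

/-- The standard dyadic interval `[k·2^{-j}, (k+1)·2^{-j})` contained in `[0,∞)`. -/
def dyadicI (j : ℤ) (k : ℕ) : Set ℝ :=
  Set.Ico ((k : ℝ) * (2:ℝ) ^ (-j)) (((k : ℝ) + 1) * (2:ℝ) ^ (-j))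

/-- The dyadic ultrametric on `[0,∞)`: the infimum of the lengths of the
dyadic intervals containing both points. -/
noncomputable def delta (x y : ℝ) : ℝ :=
  if x = y then 0
  else sInf {L : ℝ | ∃ j : ℤ, ∃ k : ℕ, L = (2:ℝ) ^ (-j) ∧ x ∈ dyadicI j k ∧ y ∈ dyadicI j k}

/-- The Haar function of the dyadic interval `dyadicI j k`. -/
noncomputable def haar (j : ℤ) (k : ℕ) (t : ℝ) : ℝ :=
  Real.sqrt ((2:ℝ) ^ j) *
    ((dyadicI (j+1) (2*k)).indicator (fun _ => (1:ℝ)) t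
      - (dyadicI (j+1) (2*k+1)).indicator (fun _ => (1:ℝ)) t)

/-- Petermichl's kernel on `[0,∞)`. -/
noncomputable def Pker (x y : ℝ) : ℝ :=
  ∑' p : ℤ × ℕ,
    haar p.1 p.2 y * (haar (p.1+1) (2*p.2) x - haar (p.1+1) (2*p.2+1) x)

/-- The elementary building block `Ω_J` associated with the dyadic interval `J = dyadicI j k`. -/
noncomputable def Omega (j : ℤ) (k : ℕ) (x y : ℝ) : ℝ :=
  ((dyadicI (j+1) (2*k)).indicator (fun _ => (1:ℝ)) y
    - (dyadicI (j+1) (2*k+1)).indicator (fun _ => (1:ℝ)) y) *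
  (((dyadicI (j+2) (4*k+1)).indicator (fun _ => (1:ℝ)) x
      + (dyadicI (j+2) (4*k+2)).indicator (fun _ => (1:ℝ)) x)
    - ((dyadicI (j+2) (4*k)).indicator (fun _ => (1:ℝ)) x
      + (dyadicI (j+2) (4*k+3)).indicator (fun _ => (1:ℝ)) x))

/-- The scale truncation `P^{l,m}` of Petermichl's kernel: only the dyadic
intervals with `2^l ≤ |I| < 2^m` are kept. -/
noncomputable def PkerScale (l m : ℤ) (x y : ℝ) : ℝ :=
  ∑' p : ℤ × ℕ,
    if (2:ℝ) ^ l ≤ (2:ℝ) ^ (-p.1) ∧ (2:ℝ) ^ (-p.1) < (2:ℝ) ^ m then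
      haar p.1 p.2 y * (haar (p.1+1) (2*p.2) x - haar (p.1+1) (2*p.2+1) x)
    else 0

/-- The metric truncation `P_{l,m}` of Petermichl's kernel. -/
noncomputable def PkerMetric (l m : ℤ) (x y : ℝ) : ℝ :=
  if (2:ℝ) ^ l ≤ delta x y ∧ delta x y < (2:ℝ) ^ m then Pker x y else 0


lemma mem_dyadicI {j : ℤ} {k : ℕ} {t : ℝ} :
    t ∈ dyadicI j k ↔ (k : ℝ) ≤ t * (2:ℝ) ^ j ∧ t * (2:ℝ) ^ j < (k : ℝ) + 1 := by
  have hp : (0:ℝ) < (2:ℝ) ^ j := by positivity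
  simp only [dyadicI, Set.mem_Ico, zpow_neg, ← div_eq_mul_inv]
  rw [div_le_iff₀ hp, lt_div_iff₀ hp]

lemma dyadicI_unique {j : ℤ} {k k' : ℕ} {t : ℝ}
    (h : t ∈ dyadicI j k) (h' : t ∈ dyadicI j k') : k = k' := by
  rw [mem_dyadicI] at h h'
  have a1 : (k:ℝ) < (k':ℝ) + 1 := lt_of_le_of_lt h.1 h'.2
  have a2 : (k':ℝ) < (k:ℝ) + 1 := lt_of_le_of_lt h'.1 h.2
  have b1 : k < k' + 1 := by exact_mod_cast a1
  have b2 : k' < k + 1 := by exact_mod_cast a2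
  omega

lemma dyadicI_child_subset {j : ℤ} {k c : ℕ} (hc : c = 2*k ∨ c = 2*k+1) :
    dyadicI (j+1) c ⊆ dyadicI j k := by
  intro t ht
  rw [mem_dyadicI] at ht ⊢
  have h2 : t * (2:ℝ) ^ (j+1) = t * (2:ℝ) ^ j * 2 := by
    rw [zpow_add₀ (two_ne_zero)]; ring
  rw [h2] at ht
  rcases hc with rfl | rfl <;> push_cast at ht <;> constructor <;> nlinarith [ht.1, ht.2]

lemma haar_eq_zero {j : ℤ} {k : ℕ} {t : ℝ} (h : t ∉ dyadicI j k) : haar j k t = 0 := by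
  have h0 : t ∉ dyadicI (j+1) (2*k) := fun ht => h (dyadicI_child_subset (Or.inl rfl) ht)
  have h1 : t ∉ dyadicI (j+1) (2*k+1) := fun ht => h (dyadicI_child_subset (Or.inr rfl) ht)
  simp [haar, Set.indicator_of_notMem, h0, h1]

lemma abs_haar_le (j : ℤ) (k : ℕ) (t : ℝ) : |haar j k t| ≤ Real.sqrt ((2:ℝ) ^ j) := by
  have hs : (0:ℝ) ≤ Real.sqrt ((2:ℝ) ^ j) := Real.sqrt_nonneg _
  rw [haar, abs_mul, abs_of_nonneg hs]
  have : |(dyadicI (j+1) (2*k)).indicator (fun _ => (1:ℝ)) t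
      - (dyadicI (j+1) (2*k+1)).indicator (fun _ => (1:ℝ)) t| ≤ 1 := by
    classical
    rw [Set.indicator_apply, Set.indicator_apply]
    split_ifs <;> norm_num
  nlinarith

/-- bound for the `x`-factor, using that `x` lies in at most one dyadic interval
of a given scale. -/
lemma abs_haar_diff_le {j : ℤ} {k : ℕ} {t : ℝ} :
    |haar (j+1) (2*k) t - haar (j+1) (2*k+1) t| ≤ Real.sqrt ((2:ℝ) ^ (j+1)) := by
  have hs : (0:ℝ) ≤ Real.sqrt ((2:ℝ) ^ (j+1)) := Real.sqrt_nonneg _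
  have key : haar (j+1) (2*k) t - haar (j+1) (2*k+1) t =
      Real.sqrt ((2:ℝ) ^ (j+1)) *
        (((dyadicI (j+1+1) (2*(2*k))).indicator (fun _ => (1:ℝ)) t
          - (dyadicI (j+1+1) (2*(2*k)+1)).indicator (fun _ => (1:ℝ)) t)
        - ((dyadicI (j+1+1) (2*(2*k+1))).indicator (fun _ => (1:ℝ)) t
          - (dyadicI (j+1+1) (2*(2*k+1)+1)).indicator (fun _ => (1:ℝ)) t)) := by
    rw [haar, haar]; ring
  rw [key, abs_mul, abs_of_nonneg hs]
  have hu : ∀ k1 k2 : ℕ, t ∈ dyadicI (j+1+1) k1 → t ∈ dyadicI (j+1+1) k2 → k1 = k2 :=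
    fun k1 k2 h1 h2 => dyadicI_unique h1 h2
  have habs : |(((dyadicI (j+1+1) (2*(2*k))).indicator (fun _ => (1:ℝ)) t
          - (dyadicI (j+1+1) (2*(2*k)+1)).indicator (fun _ => (1:ℝ)) t)
        - ((dyadicI (j+1+1) (2*(2*k+1))).indicator (fun _ => (1:ℝ)) t
          - (dyadicI (j+1+1) (2*(2*k+1)+1)).indicator (fun _ => (1:ℝ)) t))| ≤ 1 := by
    classical
    rw [Set.indicator_apply, Set.indicator_apply, Set.indicator_apply, Set.indicator_apply]
    split_ifs <;> try norm_num
    all_goals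
      (exfalso;
       first
       | exact absurd (hu _ _ ‹t ∈ dyadicI (j+1+1) (2*(2*k))› ‹t ∈ dyadicI (j+1+1) (2*(2*k)+1)›) (by omega)
       | exact absurd (hu _ _ ‹t ∈ dyadicI (j+1+1) (2*(2*k))› ‹t ∈ dyadicI (j+1+1) (2*(2*k+1))›) (by omega)
       | exact absurd (hu _ _ ‹t ∈ dyadicI (j+1+1) (2*(2*k))› ‹t ∈ dyadicI (j+1+1) (2*(2*k+1)+1)›) (by omega)
       | exact absurd (hu _ _ ‹t ∈ dyadicI (j+1+1) (2*(2*k)+1)› ‹t ∈ dyadicI (j+1+1) (2*(2*k+1))›) (by omega)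
       | exact absurd (hu _ _ ‹t ∈ dyadicI (j+1+1) (2*(2*k)+1)› ‹t ∈ dyadicI (j+1+1) (2*(2*k+1)+1)›) (by omega)
       | exact absurd (hu _ _ ‹t ∈ dyadicI (j+1+1) (2*(2*k+1))› ‹t ∈ dyadicI (j+1+1) (2*(2*k+1)+1)›) (by omega))
  nlinarith

lemma abs_term_le (j : ℤ) (k : ℕ) (x y : ℝ) :
    |haar j k y * (haar (j+1) (2*k) x - haar (j+1) (2*k+1) x)| ≤
      Real.sqrt 2 * (2:ℝ) ^ j := by
  rw [abs_mul]
  have h1 := abs_haar_le j k y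
  have h2 := abs_haar_diff_le (j := j) (k := k) (t := x)
  have hprod : Real.sqrt ((2:ℝ) ^ j) * Real.sqrt ((2:ℝ) ^ (j+1)) = Real.sqrt 2 * (2:ℝ) ^ j := by
    rw [← Real.sqrt_mul (by positivity)]
    have : (2:ℝ) ^ j * (2:ℝ) ^ (j+1) = 2 * ((2:ℝ)^j)^2 := by
      rw [zpow_add₀ (two_ne_zero)]; ring
    rw [this, Real.sqrt_mul (by norm_num), Real.sqrt_sq (by positivity)]
  calc |haar j k y| * |haar (j+1) (2*k) x - haar (j+1) (2*k+1) x|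
      ≤ Real.sqrt ((2:ℝ) ^ j) * Real.sqrt ((2:ℝ) ^ (j+1)) := by
        apply mul_le_mul h1 h2 (abs_nonneg _) (Real.sqrt_nonneg _)
    _ = Real.sqrt 2 * (2:ℝ) ^ j := hprod

lemma term_ne_zero {j : ℤ} {k : ℕ} {x y : ℝ}
    (h : haar j k y * (haar (j+1) (2*k) x - haar (j+1) (2*k+1) x) ≠ 0) :
    x ∈ dyadicI j k ∧ y ∈ dyadicI j k := by
  have hy : haar j k y ≠ 0 := fun h0 => h (by rw [h0]; ring)
  have hx : haar (j+1) (2*k) x - haar (j+1) (2*k+1) x ≠ 0 := fun h0 => h (by rw [h0]; ring)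
  have hym : y ∈ dyadicI j k := by
    by_contra hc; exact hy (haar_eq_zero hc)
  have hxm : x ∈ dyadicI j k := by
    by_contra hc
    have h0 : x ∉ dyadicI (j+1) (2*k) := fun ht => hc (dyadicI_child_subset (Or.inl rfl) ht)
    have h1 : x ∉ dyadicI (j+1) (2*k+1) := fun ht => hc (dyadicI_child_subset (Or.inr rfl) ht)
    exact hx (by rw [haar_eq_zero h0, haar_eq_zero h1]; ring)
  exact ⟨hxm, hym⟩

lemma delta_le {x y : ℝ} (hxy : x ≠ y) {j : ℤ} {k : ℕ}
    (hxm : x ∈ dyadicI j k) (hym : y ∈ dyadicI j k) : delta x y ≤ (2:ℝ) ^ (-j) := by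
  rw [delta, if_neg hxy]
  apply csInf_le
  · refine ⟨0, ?_⟩
    rintro L ⟨j', k', rfl, -, -⟩
    positivity
  · exact ⟨j, k, rfl, hxm, hym⟩

/-- The master summation lemma. -/
lemma master {x : ℝ} (hx : 0 ≤ x) (f : ℤ × ℕ → ℝ) (J : ℤ)
    (hsupp : ∀ p : ℤ × ℕ, f p ≠ 0 → x ∈ dyadicI p.1 p.2 ∧ p.1 ≤ -J)
    (hb : ∀ p : ℤ × ℕ, |f p| ≤ Real.sqrt 2 * (2:ℝ) ^ p.1) :
    Summable f ∧ |∑' p, f p| ≤ 2 * Real.sqrt 2 * (2:ℝ) ^ (-J) := by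
  classical
  set e : ℕ → ℤ × ℕ := fun n => (-J - n, ⌊x * (2:ℝ) ^ (-J - (n:ℤ))⌋₊) with he
  have hinj : Function.Injective e := by
    intro a b hab
    have : (-J - (a:ℤ)) = (-J - (b:ℤ)) := congrArg Prod.fst hab
    omega
  have hrange : ∀ p : ℤ × ℕ, p ∉ Set.range e → f p = 0 := by
    rintro ⟨j, k⟩ hp
    by_contra hne
    obtain ⟨hmem, hle⟩ := hsupp _ hne
    apply hp
    refine ⟨(-J - j).toNat, ?_⟩
    have hj : -J - ((-J - j).toNat : ℤ) = j := by omega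
    have hk : ⌊x * (2:ℝ) ^ (-J - (((-J - j).toNat : ℕ):ℤ))⌋₊ = k := by
      rw [hj]
      rw [mem_dyadicI] at hmem
      rw [Nat.floor_eq_iff (by positivity)]
      exact hmem
    simp only [he, Prod.mk.injEq]
    exact ⟨hj, hk⟩
  -- geometric majorant
  have hmaj : ∀ n : ℕ, |f (e n)| ≤ (Real.sqrt 2 * (2:ℝ) ^ (-J)) * (1/2 : ℝ) ^ n := by
    intro n
    have := hb (e n)
    have hpow : (2:ℝ) ^ ((-J - (n:ℤ))) = (2:ℝ) ^ (-J) * (1/2 : ℝ) ^ n := by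
      rw [sub_eq_add_neg, zpow_add₀ (two_ne_zero : (2:ℝ) ≠ 0)]
      congr 1
      rw [zpow_neg, zpow_natCast, one_div, inv_pow]
    calc |f (e n)| ≤ Real.sqrt 2 * (2:ℝ) ^ (e n).1 := this
      _ = (Real.sqrt 2 * (2:ℝ) ^ (-J)) * (1/2 : ℝ) ^ n := by
          simp only [he]; rw [hpow]; ring
  have hgeo : Summable (fun n : ℕ => (Real.sqrt 2 * (2:ℝ) ^ (-J)) * (1/2 : ℝ) ^ n) :=
    (summable_geometric_of_lt_one (by norm_num) (by norm_num)).mul_left _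
  have habs : Summable (fun n => |f (e n)|) := by
    apply Summable.of_nonneg_of_le (fun n => abs_nonneg _) hmaj hgeo
  have hsum_e : Summable (f ∘ e) := habs.of_abs
  have hsum : Summable f := (hinj.summable_iff hrange).mp hsum_e
  refine ⟨hsum, ?_⟩
  rw [← hinj.tsum_eq (by
    intro p hp
    by_contra hc
    exact hp (hrange p hc) : Function.support f ⊆ Set.range e)]
  calc |∑' n, f (e n)| ≤ ∑' n, |f (e n)| := by
        simpa [Real.norm_eq_abs] using norm_tsum_le_tsum_norm (f := f ∘ e) (by simpa using habs)
    _ ≤ ∑' n : ℕ, (Real.sqrt 2 * (2:ℝ) ^ (-J)) * (1/2 : ℝ) ^ n := Summable.tsum_le_tsum hmaj habs hgeo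
    _ = (Real.sqrt 2 * (2:ℝ) ^ (-J)) * (1 - 1/2)⁻¹ := by
        rw [tsum_mul_left, tsum_geometric_of_lt_one (by norm_num) (by norm_num)]
    _ = 2 * Real.sqrt 2 * (2:ℝ) ^ (-J) := by ring_nf

/-- Pointwise bound for `Q_{l,m} = P^{l,m} − P_{l,m}`:
`|Q_{l,m}(x,y)| ≤ 2√2 (2^{-l} 𝟙_{δ(x,y)<2^l} + 2^{-m} 𝟙_{δ(x,y)<2^m})`. -/
theorem Q_pointwise_bound (l m : ℤ) (hlm : l < m) (x y : ℝ) (hx : 0 ≤ x) (hy : 0 ≤ y)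
    (hxy : x ≠ y) :
    |PkerScale l m x y - PkerMetric l m x y| ≤
      2 * Real.sqrt 2 *
        ((if delta x y < (2:ℝ) ^ l then (2:ℝ) ^ (-l) else 0) +
          (if delta x y < (2:ℝ) ^ m then (2:ℝ) ^ (-m) else 0)) := by
  classical
  set f : ℤ × ℕ → ℝ := fun p =>
    haar p.1 p.2 y * (haar (p.1+1) (2*p.2) x - haar (p.1+1) (2*p.2+1) x) with hf
  set g : ℤ × ℕ → ℝ := fun p =>
    if (2:ℝ) ^ l ≤ (2:ℝ) ^ (-p.1) ∧ (2:ℝ) ^ (-p.1) < (2:ℝ) ^ m then f p else 0 with hg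
  have hPS : PkerScale l m x y = ∑' p, g p := rfl
  have hPk : Pker x y = ∑' p, f p := rfl
  have hfb : ∀ p : ℤ × ℕ, |f p| ≤ Real.sqrt 2 * (2:ℝ) ^ p.1 := fun p => abs_term_le _ _ _ _
  have hgb : ∀ p : ℤ × ℕ, |g p| ≤ Real.sqrt 2 * (2:ℝ) ^ p.1 := by
    intro p; rw [hg]; dsimp only
    split_ifs
    · exact hfb p
    · simp only [abs_zero]; positivity
  have hfd : ∀ p : ℤ × ℕ, f p ≠ 0 → x ∈ dyadicI p.1 p.2 ∧ delta x y ≤ (2:ℝ) ^ (-p.1) := by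
    intro p hp
    obtain ⟨hxm, hym⟩ := term_ne_zero hp
    exact ⟨hxm, delta_le hxy hxm hym⟩
  have hlm' : (2:ℝ) ^ l < (2:ℝ) ^ m := by
    rw [zpow_lt_zpow_iff_right₀ (by norm_num : (1:ℝ) < 2)]; exact hlm
  rcases lt_or_ge (delta x y) ((2:ℝ) ^ l) with hC | hB
  · -- Case C : delta < 2^l : PkerMetric = 0
    have hM : PkerMetric l m x y = 0 := by
      rw [PkerMetric, if_neg]; rintro ⟨h1, -⟩; linarith
    have hmg := master hx g l (by
      intro p hp
      have hcond : (2:ℝ) ^ l ≤ (2:ℝ) ^ (-p.1) ∧ (2:ℝ) ^ (-p.1) < (2:ℝ) ^ m := by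
        by_contra hc; rw [hg] at hp; simp only [if_neg hc] at hp; exact hp rfl
      have hfp : f p ≠ 0 := by
        rw [hg] at hp; simpa only [if_pos hcond] using hp
      refine ⟨(hfd p hfp).1, ?_⟩
      have := hcond.1
      rw [zpow_le_zpow_iff_right₀ (by norm_num : (1:ℝ) < 2)] at this
      omega) hgb
    rw [hPS, hM, sub_zero]
    have h1 : delta x y < (2:ℝ) ^ m := lt_trans hC hlm'
    rw [if_pos hC, if_pos h1]
    have hpos : (0:ℝ) < (2:ℝ) ^ (-m) := by positivity
    have hs2 : (0:ℝ) ≤ Real.sqrt 2 := Real.sqrt_nonneg 2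
    nlinarith [hmg.2]
  · rcases lt_or_ge (delta x y) ((2:ℝ) ^ m) with hBm | hA
    · -- Case B : 2^l ≤ delta < 2^m
      have hM : PkerMetric l m x y = Pker x y := by rw [PkerMetric, if_pos ⟨hB, hBm⟩]
      have hsupl : ∀ p : ℤ × ℕ, f p ≠ 0 → x ∈ dyadicI p.1 p.2 ∧ p.1 ≤ -l := by
        intro p hp
        obtain ⟨hxm, hd⟩ := hfd p hp
        refine ⟨hxm, ?_⟩
        have : (2:ℝ) ^ l ≤ (2:ℝ) ^ (-p.1) := le_trans hB hd
        rw [zpow_le_zpow_iff_right₀ (by norm_num : (1:ℝ) < 2)] at this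
        omega
      have hmf := master hx f l hsupl hfb
      have hmg := master hx g l (by
        intro p hp
        have hfp : f p ≠ 0 := by
          intro h0; rw [hg] at hp; dsimp only at hp
          rw [h0] at hp; simp at hp
        exact hsupl p hfp) hgb
      set h : ℤ × ℕ → ℝ := fun p =>
        if (2:ℝ) ^ l ≤ (2:ℝ) ^ (-p.1) ∧ (2:ℝ) ^ (-p.1) < (2:ℝ) ^ m then 0 else f p with hh
      have hdiff : ∀ p, g p - f p = -(h p) := by
        intro p; rw [hg, hh]; dsimp only; split_ifs <;> ring
      have hhb : ∀ p : ℤ × ℕ, |h p| ≤ Real.sqrt 2 * (2:ℝ) ^ p.1 := by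
        intro p; rw [hh]; dsimp only
        split_ifs
        · simp only [abs_zero]; positivity
        · exact hfb p
      have hmh := master hx h m (by
        intro p hp
        rw [hh] at hp; dsimp only at hp
        by_cases hcond : (2:ℝ) ^ l ≤ (2:ℝ) ^ (-p.1) ∧ (2:ℝ) ^ (-p.1) < (2:ℝ) ^ m
        · rw [if_pos hcond] at hp; exact absurd rfl hp
        · rw [if_neg hcond] at hp
          obtain ⟨hxm, hd⟩ := hfd p hp
          refine ⟨hxm, ?_⟩
          have h2l : (2:ℝ) ^ l ≤ (2:ℝ) ^ (-p.1) := le_trans hB hd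
          have h2m : (2:ℝ) ^ m ≤ (2:ℝ) ^ (-p.1) := by
            by_contra hc; exact hcond ⟨h2l, lt_of_not_ge hc⟩
          rw [zpow_le_zpow_iff_right₀ (by norm_num : (1:ℝ) < 2)] at h2m
          omega) hhb
      have key : PkerScale l m x y - PkerMetric l m x y = -∑' p, h p := by
        rw [hPS, hM, hPk, ← Summable.tsum_sub hmg.1 hmf.1, ← tsum_neg]
        exact tsum_congr hdiff
      rw [key, abs_neg]
      rw [if_neg (by linarith), if_pos hBm]
      have hs2 : (0:ℝ) ≤ Real.sqrt 2 := Real.sqrt_nonneg 2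
      calc |∑' p, h p| ≤ 2 * Real.sqrt 2 * (2:ℝ) ^ (-m) := hmh.2
        _ ≤ 2 * Real.sqrt 2 * (0 + (2:ℝ) ^ (-m)) := by rw [zero_add]
    · -- Case A : delta ≥ 2^m
      have hM : PkerMetric l m x y = 0 := by
        rw [PkerMetric, if_neg]; rintro ⟨-, h2⟩; linarith
      have hS : PkerScale l m x y = 0 := by
        rw [hPS]
        have : ∀ p : ℤ × ℕ, g p = 0 := by
          intro p
          rw [hg]; dsimp only
          split_ifs with hcond
          · by_contra hne
            have hd := (hfd p hne).2
            linarith [hcond.2]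
          · rfl
        rw [tsum_congr this, tsum_zero]
      rw [hS, hM, sub_zero, abs_zero]
      rw [if_neg (by linarith), if_neg (by linarith)]
      norm_num
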